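/- Let W be a Coxeter group with generating set {s_i}_{i∈I}, let τ be an automorphism of W permuting the generators with τ² = id, and let w ∈ W satisfy τ(w) = w⁻¹ (a τ-twisted involution). Then there exist v ∈ W and a subset X ⊆ I generating a finite parabolic subgroup W_X with longest element w_X such that τ restricted to X equals the opposition involution of X (i.e. w_X s_i w_X = s_{τ(i)} for all i ∈ X) and w = v · w_X · τ(v)⁻¹. -/

import Mathlib

open List
set_option linter.unusedSectionVars false

namespace SpringerAux

theorem z2add : ∀ x : ZMod 2, x + 1 + 1 = x := by decide

variable {I W : Type} [Group W] {M : CoxeterMatrix I} (cs : CoxeterSystem M W)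

local prefix:100 "s" => cs.simple
local prefix:100 "π" => cs.wordProd
local prefix:100 "ℓ" => cs.length

theorem ris_append (ω₁ ω₂ : List I) :
    cs.rightInvSeq (ω₁ ++ ω₂) =
      (cs.rightInvSeq ω₁).map (fun t => (π ω₂)⁻¹ * t * π ω₂) ++ cs.rightInvSeq ω₂ := by
  induction ω₁ with
  | nil => simp
  | cons i ω₁ ih =>
      show (π (ω₁ ++ ω₂))⁻¹ * (s i) * (π (ω₁ ++ ω₂)) :: cs.rightInvSeq (ω₁ ++ ω₂) = _
      rw [ih, cs.wordProd_append]
      simp [CoxeterSystem.rightInvSeq, mul_assoc]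

private theorem conj_eq_simple_iff (g x : W) (y : W) :
    (g * x * g⁻¹ = y) ↔ (x = g⁻¹ * y * g) := by
  constructor
  · intro h
    have := congrArg (fun z => g⁻¹ * z * g) h
    simpa [mul_assoc] using this
  · intro h
    rw [h]
    simp [mul_assoc]

variable [DecidableEq W]

/-- The permutation representation used to prove the exchange property. -/
def sgm (i : I) : Equiv.Perm (W × ZMod 2) where
  toFun p := (s i * p.1 * s i, p.2 + if p.1 = s i then 1 else 0)
  invFun p := (s i * p.1 * s i, p.2 + if p.1 = s i then 1 else 0)
  left_inv p := by
    have h2 : (s i * p.1 * s i = s i) ↔ (p.1 = s i) := by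
      have := conj_eq_simple_iff (s i) p.1 (s i)
      simpa using this
    ext
    · simp [mul_assoc]
    · simp only [h2]
      rcases em (p.1 = s i) with h | h <;> simp [h, z2add]
  right_inv p := by
    have h2 : (s i * p.1 * s i = s i) ↔ (p.1 = s i) := by
      have := conj_eq_simple_iff (s i) p.1 (s i)
      simpa using this
    ext
    · simp [mul_assoc]
    · simp only [h2]
      rcases em (p.1 = s i) with h | h <;> simp [h, z2add]

theorem sgm_apply (i : I) (p : W × ZMod 2) :
    sgm cs i p = (s i * p.1 * s i, p.2 + if p.1 = s i then 1 else 0) := rfl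

theorem sgm_wordProd (ω : List I) (p : W × ZMod 2) :
    (ω.map (sgm cs)).prod p =
      (π ω * p.1 * (π ω)⁻¹, p.2 + ((cs.rightInvSeq ω).count p.1 : ZMod 2)) := by
  induction ω generalizing p with
  | nil => simp
  | cons i ω ih =>
      rw [map_cons, prod_cons, Equiv.Perm.mul_apply, ih, sgm_apply]
      show _ = (π (i :: ω) * p.1 * (π (i :: ω))⁻¹,
        p.2 + ((((π ω)⁻¹ * (s i) * (π ω)) :: cs.rightInvSeq ω).count p.1 : ZMod 2))
      rw [cs.wordProd_cons]
      have h3 : (π ω * p.1 * (π ω)⁻¹ = s i) ↔ (p.1 = (π ω)⁻¹ * s i * π ω) := by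
        simpa using conj_eq_simple_iff (π ω) p.1 (s i)
      ext
      · show s i * (π ω * p.1 * (π ω)⁻¹) * s i = _
        simp [mul_assoc]
      · show p.2 + ((cs.rightInvSeq ω).count p.1 : ZMod 2)
            + (if π ω * p.1 * (π ω)⁻¹ = s i then 1 else 0) = _
        rw [List.count_cons]
        rcases em (p.1 = (π ω)⁻¹ * s i * π ω) with h | h
        · rw [if_pos (h3.mpr h), if_pos (by exact beq_iff_eq.mpr h.symm)]
          push_cast
          rw [add_assoc]
        · rw [if_neg (fun hc => h (h3.mp hc)),
            if_neg (by simpa using fun hc => h hc.symm)]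
          simp

open CoxeterSystem

theorem altWord_add (m : ℕ) : ∀ (i i' : I) (r : ℕ),
    alternatingWord i i' (r + m) =
      (if Even m then alternatingWord i i' r else alternatingWord i' i r)
        ++ alternatingWord i i' m := by
  induction m with
  | zero => intro i i' r; simp [alternatingWord]
  | succ m ih =>
      intro i i' r
      have h1 : r + (m + 1) = (r + m) + 1 := by omega
      rw [h1, alternatingWord_succ i i' (r + m), ih i' i r,
        alternatingWord_succ i i' m]
      rcases Nat.even_or_odd m with hm | hm
      · simp [hm, Nat.even_add_one, concat_eq_append, append_assoc]
      · simp [hm, Nat.not_even_iff_odd.mpr hm, Nat.even_add_one, concat_eq_append,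
          append_assoc]

theorem ris_cons (i : I) (ω : List I) :
    cs.rightInvSeq (i :: ω) = ((π ω)⁻¹ * s i * π ω) :: cs.rightInvSeq ω := rfl

section Dihedral

variable (i i' : I) (m : ℕ)

private theorem simple_conj_base : s i * (s i * s i') * s i = (s i * s i')⁻¹ := by
  simp [mul_assoc]

private theorem simple_conj_base' : s i' * (s i * s i') * s i' = (s i * s i')⁻¹ := by
  simp [mul_assoc]

private theorem hconj_i : ∀ k : ℕ, s i * (s i * s i') ^ k * s i = ((s i * s i')⁻¹) ^ k := by
  intro k
  induction k with
  | zero => simp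
  | succ k ih =>
      have h : s i * (s i * s i') ^ (k+1) * s i
          = (s i * (s i * s i') ^ k * s i) * (s i * (s i * s i') * s i) := by
        rw [pow_succ]; simp [mul_assoc]
      rw [h, ih, simple_conj_base, pow_succ]

private theorem hconj_i' : ∀ k : ℕ, s i' * (s i * s i') ^ k * s i' = ((s i * s i')⁻¹) ^ k := by
  intro k
  induction k with
  | zero => simp
  | succ k ih =>
      have h : s i' * (s i * s i') ^ (k+1) * s i'
          = (s i' * (s i * s i') ^ k * s i') * (s i' * (s i * s i') * s i') := by
        rw [pow_succ]; simp [mul_assoc]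
      rw [h, ih, simple_conj_base', pow_succ]

variable (hpm : (cs.simple i * cs.simple i') ^ m = 1)
include hpm

private theorem kstep : ∀ r : ℕ,
    s (if Even (m + r) then i' else i) * π (alternatingWord i i' m) =
      π (alternatingWord i i' m) * s (if Even r then i' else i) := by
  have hq := cs.prod_alternatingWord_eq_mul_pow i i' m
  intro r
  rcases Nat.even_or_odd m with hm | hm
  · -- m even
    obtain ⟨a, ha⟩ := hm
    have ha2 : m / 2 = a := by omega
    have hevm : Even m := ⟨a, ha⟩
    have hqq : π (alternatingWord i i' m) = (s i * s i') ^ a := by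
      rw [hq, if_pos hevm, ha2, one_mul]
    have hinv : ((s i * s i')⁻¹) ^ a = (s i * s i') ^ a := by
      rw [inv_pow, inv_eq_iff_mul_eq_one, ← pow_add, show a + a = m by omega, hpm]
    have hpariff : Even (m + r) ↔ Even r := by
      rw [Nat.even_add]; tauto
    rw [hqq]
    rcases em (Even r) with hr | hr
    · rw [if_pos (hpariff.mpr hr), if_pos hr]
      have h1 := hconj_i' cs i i'
      calc s i' * (s i * s i') ^ a
          = (s i' * (s i * s i') ^ a * s i') * s i' := by simp [mul_assoc]
        _ = (s i * s i') ^ a * s i' := by rw [h1 a, hinv]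
    · rw [if_neg (fun hc => hr (hpariff.mp hc)), if_neg hr]
      have h1 := hconj_i cs i i'
      calc s i * (s i * s i') ^ a
          = (s i * (s i * s i') ^ a * s i) * s i := by simp [mul_assoc]
        _ = (s i * s i') ^ a * s i := by rw [h1 a, hinv]
  · -- m odd
    obtain ⟨a, ha⟩ := hm
    have ha2 : m / 2 = a := by omega
    have hodm : ¬ Even m := by rw [Nat.even_iff]; omega
    have hqq : π (alternatingWord i i' m) = s i' * (s i * s i') ^ a := by
      rw [hq, if_neg hodm, ha2]
    have hkey : (s i * s i') ^ (a + 1) = ((s i * s i')⁻¹) ^ a := by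
      rw [inv_pow, eq_inv_iff_mul_eq_one, ← pow_add, show a + 1 + a = m by omega, hpm]
    have hpariff : Even (m + r) ↔ ¬ Even r := by
      rw [Nat.even_add]
      constructor
      · intro h hr; exact hodm (h.mpr hr)
      · intro h; constructor
        · intro hm'; exact absurd hm' hodm
        · intro hr; exact absurd hr h
    have hss : s i' * s i = (s i * s i')⁻¹ := by simp
    rw [hqq]
    rcases em (Even r) with hr | hr
    · rw [if_neg (fun hc => (hpariff.mp hc) hr), if_pos hr]
      -- goal : s i * (s i' * p^a) = (s i' * p^a) * s i'
      have h1 : s i' * ((s i * s i') ^ a * s i') = ((s i * s i')⁻¹) ^ a := by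
        rw [← mul_assoc]; exact hconj_i' cs i i' a
      calc s i * (s i' * (s i * s i') ^ a)
          = (s i * s i') ^ (a + 1) := by rw [pow_succ']; exact (mul_assoc _ _ _).symm
        _ = ((s i * s i')⁻¹) ^ a := hkey
        _ = s i' * ((s i * s i') ^ a * s i') := h1.symm
        _ = s i' * (s i * s i') ^ a * s i' := by rw [mul_assoc]
    · rw [if_pos (hpariff.mpr hr), if_neg hr]
      -- goal : s i' * (s i' * p^a) = (s i' * p^a) * s i
      have h1 : s i * ((s i * s i') ^ a * s i) = ((s i * s i')⁻¹) ^ a := by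
        rw [← mul_assoc]; exact hconj_i cs i i' a
      have h2 : (s i * s i') ^ a * s i = s i * ((s i * s i')⁻¹) ^ a := by
        rw [← h1]; simp [← mul_assoc]
      have h3 : ((s i * s i') ^ (a+1))⁻¹ = (s i * s i') ^ a := by
        rw [hkey, inv_pow, inv_inv]
      calc s i' * (s i' * (s i * s i') ^ a)
          = (s i * s i') ^ a := by simp [← mul_assoc]
        _ = ((s i * s i') ^ (a+1))⁻¹ := h3.symm
        _ = ((s i * s i')⁻¹) ^ (a+1) := by rw [inv_pow]
        _ = (s i * s i')⁻¹ * ((s i * s i')⁻¹) ^ a := by rw [pow_succ']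
        _ = (s i' * s i) * ((s i * s i')⁻¹) ^ a := by rw [hss]
        _ = s i' * (s i * ((s i * s i')⁻¹) ^ a) := by rw [mul_assoc]
        _ = s i' * ((s i * s i') ^ a * s i) := by rw [← h2]
        _ = s i' * (s i * s i') ^ a * s i := by rw [← mul_assoc]

end Dihedral

section Dihedral2

variable (i i' : I) (m : ℕ) (hpm : (cs.simple i * cs.simple i') ^ m = 1)
include hpm

private theorem dconst : ∀ r : ℕ,
    π (alternatingWord i i' (m + r)) = π (alternatingWord i i' m) * π (alternatingWord i i' r) := by
  intro r
  induction r with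
  | zero => simp [alternatingWord]
  | succ r ih =>
      have h1 : m + (r + 1) = (m + r) + 1 := by omega
      rw [h1, alternatingWord_succ', cs.wordProd_cons, ih,
        alternatingWord_succ' i i' r, cs.wordProd_cons, ← mul_assoc,
        kstep cs i i' m hpm r, mul_assoc]

private theorem u_eq (r : ℕ) :
    (π (alternatingWord i i' (m + r)))⁻¹ * s (if Even (m + r) then i' else i)
        * π (alternatingWord i i' (m + r)) =
      (π (alternatingWord i i' r))⁻¹ * s (if Even r then i' else i)
        * π (alternatingWord i i' r) := by
  have h1 : s (if Even (m + r) then i' else i) * π (alternatingWord i i' (m + r))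
      = π (alternatingWord i i' ((m + r) + 1)) := by
    rw [alternatingWord_succ', cs.wordProd_cons]
  have h2 : s (if Even r then i' else i) * π (alternatingWord i i' r)
      = π (alternatingWord i i' (r + 1)) := by
    rw [alternatingWord_succ', cs.wordProd_cons]
  rw [mul_assoc, mul_assoc, h1, h2, show (m + r) + 1 = m + (r + 1) by omega,
    dconst cs i i' m hpm (r + 1), dconst cs i i' m hpm r]
  simp [mul_assoc]

private theorem ris_alt (x y : I)
    (hxy : ∀ r : ℕ, alternatingWord x y r ++ alternatingWord i i' m
      = alternatingWord i i' (r + m))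
    (hl : ∀ r : ℕ, (if Even r then y else x) = (if Even (m + r) then i' else i)) :
    ∀ r : ℕ,
      (cs.rightInvSeq (alternatingWord x y r)).map
        (fun t => (π (alternatingWord i i' m))⁻¹ * t * π (alternatingWord i i' m))
      = cs.rightInvSeq (alternatingWord i i' r) := by
  intro r
  induction r with
  | zero => simp [alternatingWord]
  | succ r ih =>
      rw [alternatingWord_succ' x y r, alternatingWord_succ' i i' r, ris_cons, ris_cons,
        map_cons, ih]
      congr 1
      rw [hl r]
      have hword : π (alternatingWord x y r) * π (alternatingWord i i' m)
          = π (alternatingWord i i' (r + m)) := by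
        rw [← cs.wordProd_append, hxy r]
      calc (π (alternatingWord i i' m))⁻¹ *
              ((π (alternatingWord x y r))⁻¹ * s (if Even (m + r) then i' else i)
                * π (alternatingWord x y r)) * π (alternatingWord i i' m)
          = (π (alternatingWord x y r) * π (alternatingWord i i' m))⁻¹
              * s (if Even (m + r) then i' else i)
              * (π (alternatingWord x y r) * π (alternatingWord i i' m)) := by
            simp [mul_assoc]
        _ = (π (alternatingWord i i' (r + m)))⁻¹ * s (if Even (m + r) then i' else i)
              * π (alternatingWord i i' (r + m)) := by rw [hword]
        _ = (π (alternatingWord i i' (m + r)))⁻¹ * s (if Even (m + r) then i' else i)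
              * π (alternatingWord i i' (m + r)) := by rw [Nat.add_comm r m]
        _ = (π (alternatingWord i i' r))⁻¹ * s (if Even r then i' else i)
              * π (alternatingWord i i' r) := u_eq cs i i' m hpm r

private theorem braid_count_even (t : W) :
    Even ((cs.rightInvSeq (alternatingWord i i' (2 * m))).count t) := by
  have hsplit : alternatingWord i i' (2 * m)
      = (if Even m then alternatingWord i i' m else alternatingWord i' i m)
          ++ alternatingWord i i' m := by
    rw [two_mul, ← altWord_add m i i' m]
  have hxy : ∀ r : ℕ, (if Even m then alternatingWord i i' r else alternatingWord i' i r)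
      ++ alternatingWord i i' m = alternatingWord i i' (r + m) := by
    intro r; rw [← altWord_add m i i' r]
  rw [hsplit, ris_append, List.count_append]
  rcases em (Even m) with hm | hm
  · have halt := ris_alt cs i i' m hpm i i'
      (by intro r; have := hxy r; rwa [if_pos hm] at this)
      (by
        intro r
        have : Even (m + r) ↔ Even r := by rw [Nat.even_add]; tauto
        rcases em (Even r) with hr | hr
        · rw [if_pos hr, if_pos (this.mpr hr)]
        · rw [if_neg hr, if_neg (fun hc => hr (this.mp hc))]) m
    rw [if_pos hm, halt]
    exact ⟨_, rfl⟩
  · have halt := ris_alt cs i i' m hpm i' i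
      (by intro r; have := hxy r; rwa [if_neg hm] at this)
      (by
        intro r
        have hiff : Even (m + r) ↔ ¬ Even r := by
          rw [Nat.even_add]; tauto
        rcases em (Even r) with hr | hr
        · rw [if_pos hr, if_neg (fun hc => (hiff.mp hc) hr)]
        · rw [if_neg hr, if_pos (hiff.mpr hr)]) m
    rw [if_neg hm, halt]
    exact ⟨_, rfl⟩

end Dihedral2

theorem zmod2_of_even {n : ℕ} (h : Even n) : (n : ZMod 2) = 0 := by
  obtain ⟨k, rfl⟩ := h
  push_cast
  rw [← two_mul, show ((2 : ZMod 2)) = 0 by decide, zero_mul]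

private theorem sgm_pow (i i' : I) : ∀ m : ℕ,
    ((alternatingWord i i' (2 * m)).map (sgm cs)).prod = (sgm cs i * sgm cs i') ^ m := by
  intro m
  induction m with
  | zero => simp [alternatingWord]
  | succ m ih =>
      have hword : alternatingWord i i' (2 * (m + 1)) = i :: i' :: alternatingWord i i' (2 * m) := by
        rw [show 2 * (m + 1) = (2 * m + 1) + 1 by omega, alternatingWord_succ',
          alternatingWord_succ']
        have h1 : ¬ Even (2 * m + 1) := by rw [Nat.even_iff]; omega
        have h2 : Even (2 * m) := ⟨m, by omega⟩
        rw [if_neg h1, if_pos h2]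
      rw [hword, map_cons, map_cons, prod_cons, prod_cons, ih, ← mul_assoc, pow_succ']

theorem sgm_liftable : M.IsLiftable (sgm cs) := by
  intro i i'
  apply Equiv.ext
  intro p
  have h1 := sgm_pow cs i i' (M i i')
  rw [← h1, sgm_wordProd]
  have h2 : π (alternatingWord i i' (2 * M i i')) = 1 := by
    rw [cs.prod_alternatingWord_eq_mul_pow, if_pos ⟨M i i', by omega⟩,
      show 2 * M i i' / 2 = M i i' by omega, one_mul, cs.simple_mul_simple_pow]
  have h3 : ((cs.rightInvSeq (alternatingWord i i' (2 * M i i'))).count p.1 : ZMod 2) = 0 :=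
    zmod2_of_even (braid_count_even cs i i' (M i i') (cs.simple_mul_simple_pow i i') p.1)
  rw [h2, h3]
  simp

/-- The monoid homomorphism from `W` to permutations of `W × ZMod 2`. -/
def frep : W →* Equiv.Perm (W × ZMod 2) := cs.lift ⟨sgm cs, sgm_liftable cs⟩

theorem frep_wordProd (ω : List I) : frep cs (π ω) = (ω.map (sgm cs)).prod := by
  unfold CoxeterSystem.wordProd
  rw [map_list_prod, List.map_map]
  congr 1
  apply List.map_congr_left
  intro i _
  show frep cs (s i) = sgm cs i
  exact cs.lift_apply_simple (sgm_liftable cs) i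

theorem count_invariance {ω ω' : List I} (h : π ω = π ω') (t : W) :
    ((cs.rightInvSeq ω).count t : ZMod 2) = ((cs.rightInvSeq ω').count t : ZMod 2) := by
  have h1 : frep cs (π ω) (t, (0 : ZMod 2)) = frep cs (π ω') (t, (0 : ZMod 2)) := by rw [h]
  rw [frep_wordProd, frep_wordProd, sgm_wordProd, sgm_wordProd] at h1
  have h2 := congrArg Prod.snd h1
  simpa [h] using h2

/-- Exchange property, via the permutation representation. -/
theorem mem_ris_of_rightDescent {w : W} {j : I} (hw : cs.IsRightDescent w j)
    {ω : List I} (hω : cs.IsReduced ω) (hprod : w = π ω) :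
    s j ∈ cs.rightInvSeq ω := by
  obtain ⟨κ, hκred, hκ⟩ := cs.exists_reduced_word' (w * s j)
  have hπ : π ω = π (κ ++ [j]) := by
    rw [cs.wordProd_append, ← hκ, cs.wordProd_singleton, ← hprod]
    simp [mul_assoc]
  have hinv := count_invariance cs hπ (s j)
  have hnot : s j ∉ cs.rightInvSeq κ := by
    intro hmem
    have h2 := (cs.isRightInversion_of_mem_rightInvSeq hκred hmem).2
    rw [← hκ] at h2
    simp only [CoxeterSystem.simple_mul_simple_cancel_right] at h2
    unfold CoxeterSystem.IsRightDescent at hw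
    omega
  have hcnt : (cs.rightInvSeq (κ ++ [j])).count (s j) = 1 := by
    rw [ris_append]
    rw [List.count_append]
    have hz : ((cs.rightInvSeq κ).map
        (fun t => (π [j])⁻¹ * t * π [j])).count (s j) = 0 := by
      rw [List.count_eq_zero]
      intro hmem
      obtain ⟨t, htmem, ht⟩ := List.mem_map.mp hmem
      have ht2 : t = s j := by
        have h5 := congrArg (fun z => (π [j]) * z * (π [j])⁻¹) ht
        simp only [cs.wordProd_singleton] at h5
        calc t = s j * ((s j)⁻¹ * t * s j) * (s j)⁻¹ := by simp [mul_assoc]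
          _ = s j * (s j) * (s j)⁻¹ := by rw [h5]
          _ = s j := by simp
      exact hnot (ht2 ▸ htmem)
    rw [hz]
    simp
  rw [hcnt] at hinv
  by_contra hmem
  rw [List.count_eq_zero_of_not_mem hmem] at hinv
  exact absurd hinv (by decide)

theorem exists_eraseIdx_of_rightDescent {w : W} {j : I} (hw : cs.IsRightDescent w j)
    {ω : List I} (hω : cs.IsReduced ω) (hprod : w = π ω) :
    ∃ k, k < ω.length ∧ w * s j = π (ω.eraseIdx k) := by
  have hmem := mem_ris_of_rightDescent cs hw hω hprod
  obtain ⟨k, hk, hEq⟩ := List.mem_iff_getElem.mp hmem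
  refine ⟨k, by simpa using hk, ?_⟩
  rw [hprod, ← cs.wordProd_mul_getD_rightInvSeq ω k]
  congr 1
  rw [← hEq, List.getD_eq_getElem]

theorem mem_lis_of_leftDescent {w : W} {j : I} (hw : cs.IsLeftDescent w j)
    {ω : List I} (hω : cs.IsReduced ω) (hprod : w = π ω) :
    s j ∈ cs.leftInvSeq ω := by
  have hd : cs.IsRightDescent w⁻¹ j := cs.isRightDescent_inv_iff.mpr hw
  have hred : cs.IsReduced ω.reverse := (cs.isReduced_reverse_iff ω).mpr hω
  have hprod' : w⁻¹ = π ω.reverse := by rw [cs.wordProd_reverse, hprod]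
  have := mem_ris_of_rightDescent cs hd hred hprod'
  rw [cs.rightInvSeq_reverse] at this
  exact List.mem_reverse.mp this

/-- The "folding" lemma. -/
theorem folding {w : W} {a b : I} (ha : ℓ (s a * w) < ℓ w) (hb : ℓ (w * s b) < ℓ w)
    (hab : ℓ (s a * w * s b) = ℓ w) : s a * w = w * s b := by
  obtain ⟨κ, hκred, hκ⟩ := cs.exists_reduced_word' (w * s b)
  have hlen : ℓ (w * s b) + 1 = ℓ w :=
    (cs.length_mul_simple w b).resolve_left (by omega)
  have hprod : w = π (κ ++ [b]) := by
    rw [cs.wordProd_append, ← hκ, cs.wordProd_singleton]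
    simp [mul_assoc]
  have hωred : cs.IsReduced (κ ++ [b]) := by
    unfold CoxeterSystem.IsReduced at hκred ⊢
    rw [← hprod, List.length_append, ← hκred, ← hκ]
    simp
    omega
  have hmem := mem_lis_of_leftDescent cs ha hωred hprod
  rw [← List.concat_eq_append, cs.leftInvSeq_concat, List.concat_eq_append] at hmem
  rcases List.mem_append.mp hmem with h1 | h1
  · exfalso
    have h2 := (cs.isLeftInversion_of_mem_leftInvSeq hκred h1).2
    rw [← hκ, ← mul_assoc] at h2
    omega
  · have h2 : s a = π κ * s b * (π κ)⁻¹ := by simpa using h1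
    rw [← hκ] at h2
    rw [h2]
    simp [mul_assoc]

/-! ### Support: elements of a standard parabolic subgroup have reduced words over it -/

theorem wordProd_mem_closure (X : Set I) (ω : List I) (h : ∀ i ∈ ω, i ∈ X) :
    π ω ∈ Subgroup.closure (cs.simple '' X) := by
  induction ω with
  | nil => simp only [CoxeterSystem.wordProd_nil]; exact Subgroup.one_mem _
  | cons i ω ih =>
      rw [cs.wordProd_cons]
      exact Subgroup.mul_mem _
        (Subgroup.subset_closure ⟨i, h i (by simp), rfl⟩)
        (ih (fun i' hi' => h i' (by simp [hi'])))

private theorem support_step (X : Set I) {u : W} {j : I} (hj : j ∈ X)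
    (hu : ∃ ω, (∀ i ∈ ω, i ∈ X) ∧ ω.length = ℓ u ∧ u = π ω) :
    ∃ ω, (∀ i ∈ ω, i ∈ X) ∧ ω.length = ℓ (u * s j) ∧ u * s j = π ω := by
  obtain ⟨ω, hX, hlen, rfl⟩ := hu
  rcases cs.length_mul_simple (π ω) j with hup | hdown
  · refine ⟨ω ++ [j], ?_, ?_, ?_⟩
    · intro i hi
      rcases List.mem_append.mp hi with h | h
      · exact hX i h
      · simp at h; exact h ▸ hj
    · simp [hup, hlen]
    · rw [cs.wordProd_append, cs.wordProd_singleton]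
  · have hred : cs.IsReduced ω := by unfold CoxeterSystem.IsReduced; omega
    have hdesc : cs.IsRightDescent (π ω) j := by
      unfold CoxeterSystem.IsRightDescent; omega
    obtain ⟨k, hk, heq⟩ := exists_eraseIdx_of_rightDescent cs hdesc hred rfl
    refine ⟨ω.eraseIdx k, ?_, ?_, heq⟩
    · intro i hi
      exact hX i (List.eraseIdx_subset hi)
    · have h1 := List.length_eraseIdx_add_one hk
      have h2 : ℓ (π (ω.eraseIdx k)) ≤ (ω.eraseIdx k).length := cs.length_wordProd_le _
      rw [← heq] at h2
      omega

theorem exists_reduced_word_over (X : Set I) {u : W}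
    (hu : u ∈ Subgroup.closure (cs.simple '' X)) :
    ∃ ω, (∀ i ∈ ω, i ∈ X) ∧ ω.length = ℓ u ∧ u = π ω := by
  have key : ∀ (ωv : List I), (∀ i ∈ ωv, i ∈ X) →
      ∀ {a : W}, (∃ ω, (∀ i ∈ ω, i ∈ X) ∧ ω.length = ℓ a ∧ a = π ω) →
      (∃ ω, (∀ i ∈ ω, i ∈ X) ∧ ω.length = ℓ (a * π ωv) ∧ a * π ωv = π ω) := by
    intro ωv
    induction ωv with
    | nil => intro _ a ha; simpa using ha
    | cons j rest ih =>
        intro hmem a ha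
        have h1 : a * π (j :: rest) = (a * s j) * π rest := by
          rw [cs.wordProd_cons, mul_assoc]
        rw [h1]
        exact ih (fun i hi => hmem i (by simp [hi]))
          (support_step cs X (hmem j (by simp)) ha)
  refine Subgroup.closure_induction ?_ ?_ ?_ ?_ hu
  · rintro x ⟨i, hi, rfl⟩
    exact ⟨[i], by simpa using hi, by simp, by simp⟩
  · exact ⟨[], by simp, by simp, by simp⟩
  · rintro x y _ _ hx hy
    obtain ⟨ωy, hy1, hy2, rfl⟩ := hy
    exact key ωy hy1 hx
  · rintro x _ hx
    obtain ⟨ω, h1, h2, rfl⟩ := hx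
    refine ⟨ω.reverse, by simpa using h1, ?_, by rw [cs.wordProd_reverse]⟩
    rw [cs.length_inv]
    simpa using h2

/-! ### Automorphism lemmas -/

variable (φ : W ≃* W) (τ : I → I)

theorem phi_wordProd (hφs : ∀ i, φ (s i) = s (τ i)) (ω : List I) :
    φ (π ω) = π (ω.map τ) := by
  induction ω with
  | nil => simp
  | cons i ω ih => rw [cs.wordProd_cons, map_mul, ih, hφs, List.map_cons, cs.wordProd_cons]

theorem length_phi (hφs : ∀ i, φ (s i) = s (τ i)) (hφ2 : ∀ u, φ (φ u) = u) (u : W) :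
    ℓ (φ u) = ℓ u := by
  have le : ∀ v : W, ℓ (φ v) ≤ ℓ v := by
    intro v
    obtain ⟨ω, hωlen, rfl⟩ := cs.exists_reduced_word v
    rw [phi_wordProd cs φ τ hφs]
    calc ℓ (π (ω.map τ)) ≤ (ω.map τ).length := cs.length_wordProd_le _
      _ = ω.length := by simp
      _ = ℓ (π ω) := hωlen.symm
  have h2 := le (φ u)
  rw [hφ2] at h2
  exact le_antisymm (le u) h2

theorem closure_comm (X : Set I) {w : W} (hc : ∀ i ∈ X, w * s i = φ (s i) * w) :
    ∀ u ∈ Subgroup.closure (cs.simple '' X), w * u = φ u * w := by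
  intro u hu
  refine Subgroup.closure_induction ?_ ?_ ?_ ?_ hu
  · rintro x ⟨i, hi, rfl⟩; exact hc i hi
  · simp
  · rintro x y _ _ hx hy
    rw [map_mul, ← mul_assoc, hx, mul_assoc, hy, mul_assoc]
  · rintro x _ hx
    rw [map_inv]
    calc w * x⁻¹ = (φ x)⁻¹ * (φ x * w) * x⁻¹ := by simp [mul_assoc]
      _ = (φ x)⁻¹ * (w * x) * x⁻¹ := by rw [hx]
      _ = (φ x)⁻¹ * w := by simp [mul_assoc]

/-! ### The key length-additivity lemma -/

theorem length_additive (X : Set I) {w : W}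
    (hφs : ∀ i, φ (s i) = s (τ i)) (hφ2 : ∀ u, φ (φ u) = u)
    (hd : ∀ i ∈ X, cs.IsRightDescent w i)
    (hc : ∀ i ∈ X, w * s i = φ (s i) * w) :
    ∀ u ∈ Subgroup.closure (cs.simple '' X), ℓ u + ℓ (w * u) = ℓ w := by
  suffices H : ∀ n : ℕ, ∀ u ∈ Subgroup.closure (cs.simple '' X), ℓ u = n →
      ℓ u + ℓ (w * u) = ℓ w by
    intro u hu; exact H (ℓ u) u hu rfl
  intro n
  induction n using Nat.strong_induction_on with
  | _ n IHn =>
  intro u hu hun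
  by_cases hu1 : u = 1
  · subst hu1; simp
  · obtain ⟨ω, hX, hlen, hword⟩ := exists_reduced_word_over cs X hu
    have hω0 : ω ≠ [] := by
      intro h
      rw [h] at hlen
      exact hu1 (cs.length_eq_zero_iff.mp (by simp [← hlen]))
    set j := ω.getLast hω0 with hj
    have hjX : j ∈ X := hX j (List.getLast_mem hω0)
    set ω' := ω.dropLast with hω'
    have hsplit : ω = ω' ++ [j] := (List.dropLast_append_getLast hω0).symm
    set u' := π ω' with hu'
    have hu'mem : u' ∈ Subgroup.closure (cs.simple '' X) :=
      wordProd_mem_closure cs X ω' (fun i hi => hX i (List.dropLast_subset _ hi))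
    have husplit : u = u' * s j := by
      rw [hword, hsplit, cs.wordProd_append, cs.wordProd_singleton]
    have hlen' : ℓ u' + 1 = ℓ u := by
      have h1 : ℓ u' ≤ ω'.length := cs.length_wordProd_le _
      have h2 : ω'.length + 1 = ω.length := by
        rw [hsplit]; simp
      have h3 : ℓ u ≤ ℓ u' + 1 := by
        rw [husplit]
        calc ℓ (u' * s j) ≤ ℓ u' + ℓ (s j) := cs.length_mul_le _ _
          _ = ℓ u' + 1 := by rw [cs.length_simple]
      omega
    have hIH : ℓ u' + ℓ (w * u') = ℓ w := IHn (ℓ u') (by omega) u' hu'mem rfl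
    rcases cs.length_mul_simple (w * u') j with hup | hdown
    · -- the hard case : ℓ (w * u' * s j) = ℓ (w * u') + 1, derive a contradiction
      exfalso
      obtain ⟨c, hcred, hc'⟩ := cs.exists_reduced_word' (w * u')
      obtain ⟨e, hered, he⟩ := cs.exists_reduced_word' (φ u')⁻¹
      have hcomm := closure_comm cs φ X hc u' hu'mem
      have hwprod : w = π (e ++ c) := by
        rw [cs.wordProd_append, ← he, ← hc']
        rw [hcomm]
        simp [mul_assoc]
      have helen : e.length = ℓ u' := by
        have h0 : ℓ (π e) = e.length := hered
        rw [← he, cs.length_inv, length_phi cs φ τ hφs hφ2] at h0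
        omega
      have hwred : cs.IsReduced (e ++ c) := by
        show ℓ (π (e ++ c)) = (e ++ c).length
        rw [← hwprod, List.length_append, helen]
        have hc0 : ℓ (π c) = c.length := hcred
        rw [← hc'] at hc0
        omega
      have hmem := mem_ris_of_rightDescent cs (hd j hjX) hwred hwprod
      rw [ris_append] at hmem
      rcases List.mem_append.mp hmem with h1 | h1
      · obtain ⟨r, hrmem, hrconj⟩ := List.mem_map.mp h1
        have hrinv := (cs.isRightInversion_of_mem_rightInvSeq hered hrmem).2
        have hr : r = π c * s j * (π c)⁻¹ := by
          calc r = π c * ((π c)⁻¹ * r * π c) * (π c)⁻¹ := by simp [mul_assoc]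
            _ = π c * s j * (π c)⁻¹ := by rw [hrconj]
        have hval : π e * r = φ (s j * u'⁻¹) := by
          rw [← he, hr, ← hc']
          have hcomm := closure_comm cs φ X hc u' hu'mem
          have hcomminv : w * u'⁻¹ = (φ u')⁻¹ * w := by
            have := closure_comm cs φ X hc u'⁻¹ (Subgroup.inv_mem _ hu'mem)
            rw [map_inv] at this
            exact this
          rw [map_mul, hφs j, map_inv]
          calc (φ u')⁻¹ * (w * u' * s j * (w * u')⁻¹)
              = (φ u')⁻¹ * (φ u' * w * s j * (w * u')⁻¹) := by rw [hcomm]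
            _ = w * s j * (w * u')⁻¹ := by simp [mul_assoc]
            _ = s (τ j) * w * (w * u')⁻¹ := by rw [hc j hjX, hφs j]
            _ = s (τ j) * (w * u'⁻¹) * w⁻¹ := by simp [mul_assoc]
            _ = s (τ j) * ((φ u')⁻¹ * w) * w⁻¹ := by rw [hcomminv]
            _ = s (τ j) * (φ u')⁻¹ := by simp [mul_assoc]
        have hlval : ℓ (π e * r) = ℓ u' + 1 := by
          rw [hval, length_phi cs φ τ hφs hφ2]
          have : s j * u'⁻¹ = (u' * s j)⁻¹ := by simp
          rw [this, cs.length_inv, ← husplit]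
          omega
        have hle : ℓ (π e) = ℓ u' := by rw [← he, cs.length_inv, length_phi cs φ τ hφs hφ2]
        omega
      · have h2 := (cs.isRightInversion_of_mem_rightInvSeq hcred h1).2
        rw [← hc'] at h2
        omega
    · have h4 : ℓ (u' * s j) = ℓ u := by rw [← husplit]
      have h5 : w * u = w * u' * s j := by rw [husplit, mul_assoc]
      rw [h5]
      omega

/-! ### Finiteness of bounded-length lists -/

theorem finite_bounded_lists (E : Set W) (hE : E.Finite) :
    ∀ n : ℕ, {l : List W | l.length ≤ n ∧ ∀ x ∈ l, x ∈ E}.Finite := by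
  intro n
  induction n with
  | zero =>
      apply Set.Finite.subset (Set.finite_singleton ([] : List W))
      rintro l ⟨hl, -⟩
      simp at hl ⊢
      exact hl
  | succ n ih =>
      apply Set.Finite.subset
        (Set.Finite.insert ([] : List W)
          (Set.Finite.image (fun p : W × List W => p.1 :: p.2) (hE.prod ih)))
      rintro l ⟨hl, hmem⟩
      cases l with
      | nil => exact Set.mem_insert _ _
      | cons x t =>
          apply Set.mem_insert_of_mem
          refine ⟨(x, t), ⟨hmem x (by simp), ?_, ?_⟩, rfl⟩
          · show t.length ≤ n
            simp at hl; omega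
          · intro y hy; exact hmem y (by simp [hy])

end SpringerAux

open SpringerAux

/-- **Springer's theorem on twisted involutions.**
Let `(W, {sᵢ}_{i ∈ I})` be a Coxeter system, let `φ` be an automorphism of `W` permuting the
simple reflections via a permutation `τ` of `I`, with `φ² = id`, and let `w ∈ W` be a
`τ`-twisted involution, i.e. `φ w = w⁻¹`.  Then there exist `v ∈ W` and a subset `X ⊆ I`
generating a finite parabolic subgroup `W_X` with longest element `w_X` (an element of `W_X`
of maximal length) such that `τ` restricted to `X` is the opposition involution of `X`
(i.e. `w_X sᵢ w_X = s_{τ i}` for all `i ∈ X`) and `w = v * w_X * (φ v)⁻¹`. -/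
theorem springer_twisted_involution
    {I : Type} {W : Type} [Group W] {M : CoxeterMatrix I} (cs : CoxeterSystem M W)
    (φ : W ≃* W) (τ : Equiv.Perm I)
    (hφs : ∀ i, φ (cs.simple i) = cs.simple (τ i))
    (hφ2 : ∀ u, φ (φ u) = u)
    (w : W) (hw : φ w = w⁻¹) :
    ∃ (v : W) (X : Set I) (wX : W),
      wX ∈ Subgroup.closure (cs.simple '' X) ∧
      Set.Finite ((Subgroup.closure (cs.simple '' X) : Subgroup W) : Set W) ∧
      (∀ u ∈ Subgroup.closure (cs.simple '' X), cs.length u ≤ cs.length wX) ∧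
      (∀ i ∈ X, wX * cs.simple i * wX = cs.simple (τ i)) ∧
      w = v * wX * (φ v)⁻¹ := by
  classical
  suffices H : ∀ n : ℕ, ∀ w : W, φ w = w⁻¹ → cs.length w = n →
      ∃ (v : W) (X : Set I) (wX : W),
      wX ∈ Subgroup.closure (cs.simple '' X) ∧
      Set.Finite ((Subgroup.closure (cs.simple '' X) : Subgroup W) : Set W) ∧
      (∀ u ∈ Subgroup.closure (cs.simple '' X), cs.length u ≤ cs.length wX) ∧
      (∀ i ∈ X, wX * cs.simple i * wX = cs.simple (τ i)) ∧
      w = v * wX * (φ v)⁻¹ by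
    exact H (cs.length w) w hw rfl
  intro n
  induction n using Nat.strong_induction_on with
  | _ n IH =>
  intro w hw hn
  by_cases hw1 : w = 1
  · subst hw1
    refine ⟨1, ∅, 1, Subgroup.one_mem _, ?_, ?_, by simp, by simp⟩
    · rw [Set.image_empty, Subgroup.closure_empty]
      rw [Subgroup.coe_bot]
      exact Set.finite_singleton _
    · intro u hu
      rw [Set.image_empty, Subgroup.closure_empty, Subgroup.mem_bot] at hu
      simp [hu]
  · -- pick a right descent
    by_cases hAB : ∃ i, cs.IsRightDescent w i ∧ cs.simple (τ i) * w * cs.simple i ≠ w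
    · -- Case A : reduce the length by twisted conjugation
      obtain ⟨i, hdesc, hne⟩ := hAB
      have hφτi : φ (cs.simple (τ i)) = cs.simple i := by
        rw [← hφs i, hφ2]
      have hlen1 : cs.length (w * cs.simple i) + 1 = cs.length w :=
        (cs.length_mul_simple w i).resolve_left (by
          have := hdesc
          unfold CoxeterSystem.IsRightDescent at this
          omega)
      have hleft : cs.length (cs.simple (τ i) * w) = cs.length (w * cs.simple i) := by
        have h1 : φ (cs.simple (τ i) * w) = cs.simple i * w⁻¹ := by
          rw [map_mul, hφτi, hw]
        have h2 : cs.length (cs.simple (τ i) * w) = cs.length (cs.simple i * w⁻¹) := by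
          rw [← h1, length_phi cs φ τ hφs hφ2]
        rw [h2]
        have h3 : cs.simple i * w⁻¹ = (w * cs.simple i)⁻¹ := by simp
        rw [h3, cs.length_inv]
      have htwist : φ (cs.simple (τ i) * w * cs.simple i)
          = (cs.simple (τ i) * w * cs.simple i)⁻¹ := by
        rw [map_mul, map_mul, hφτi, hφs i, hw]
        simp [mul_assoc]
      have hlen2 : cs.length (cs.simple (τ i) * w * cs.simple i) < n := by
        rcases cs.length_mul_simple (cs.simple (τ i) * w) i with hup | hdown
        · exfalso
          apply hne
          have hfold := folding cs (a := τ i) (b := i) (w := w)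
            (by
              unfold CoxeterSystem.IsRightDescent at hdesc
              omega)
            hdesc
            (by omega)
          rw [hfold]
          simp
        · omega
      obtain ⟨v', X, wX, h1, h2, h3, h4, h5⟩ :=
        IH (cs.length (cs.simple (τ i) * w * cs.simple i)) hlen2
          (cs.simple (τ i) * w * cs.simple i) htwist rfl
      refine ⟨cs.simple (τ i) * v', X, wX, h1, h2, h3, h4, ?_⟩
      have hφv : (φ (cs.simple (τ i) * v'))⁻¹ = (φ v')⁻¹ * cs.simple i := by
        rw [map_mul, hφτi, mul_inv_rev]
        simp
      rw [hφv]
      have hback : cs.simple (τ i) * (cs.simple (τ i) * w * cs.simple i) * cs.simple i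
          = w := by
        simp [mul_assoc]
      rw [← hback, h5]
      simp [mul_assoc]
    · -- Case B
      push_neg at hAB
      set X : Set I := {i | cs.IsRightDescent w i} with hXdef
      have hd : ∀ i ∈ X, cs.IsRightDescent w i := fun i hi => hi
      have hc : ∀ i ∈ X, w * cs.simple i = φ (cs.simple i) * w := by
        intro i hi
        have hfold := hAB i hi
        rw [hφs i]
        calc w * cs.simple i = (cs.simple (τ i) * w * cs.simple i) * cs.simple i := by
              rw [hfold]
          _ = cs.simple (τ i) * w := by simp [mul_assoc]
      have hadd := length_additive cs φ τ X hφs hφ2 hd hc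
      have hcomm := closure_comm cs φ X hc
      -- minimal coset representative
      set T : Set ℕ := {k | ∃ u ∈ Subgroup.closure (cs.simple '' X), cs.length (w * u) = k}
        with hTdef
      have hTne : T.Nonempty := ⟨cs.length (w * 1), 1, Subgroup.one_mem _, rfl⟩
      obtain ⟨u₀, hu₀S, hu₀⟩ := Nat.sInf_mem hTne
      have hmin : ∀ u ∈ Subgroup.closure (cs.simple '' X),
          cs.length (w * u₀) ≤ cs.length (w * u) := by
        intro u hu
        rw [hu₀]
        exact Nat.sInf_le ⟨u, hu, rfl⟩
      have hx1 : w * u₀ = 1 := by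
        by_contra hx
        obtain ⟨k, hk⟩ := cs.exists_leftDescent_of_ne_one hx
        unfold CoxeterSystem.IsLeftDescent at hk
        have hadd₀ := hadd u₀ hu₀S
        have hkw : cs.IsRightDescent w (τ k) := by
          have hskw : cs.length (cs.simple k * w) < cs.length w := by
            have h6 : cs.simple k * w = (cs.simple k * (w * u₀)) * u₀⁻¹ := by
              simp [mul_assoc]
            calc cs.length (cs.simple k * w)
                ≤ cs.length (cs.simple k * (w * u₀)) + cs.length u₀⁻¹ := by
                  rw [h6]; exact cs.length_mul_le _ _
              _ < cs.length (w * u₀) + cs.length u₀ := by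
                  rw [cs.length_inv]; omega
              _ = cs.length w := by omega
          have h7 : φ (cs.simple k * w) = cs.simple (τ k) * w⁻¹ := by
            rw [map_mul, hφs k, hw]
          have h8 : cs.length (w * cs.simple (τ k)) = cs.length (cs.simple k * w) := by
            have h9 : w * cs.simple (τ k) = (cs.simple (τ k) * w⁻¹)⁻¹ := by simp
            rw [h9, cs.length_inv, ← h7, length_phi cs φ τ hφs hφ2]
          unfold CoxeterSystem.IsRightDescent
          omega
        have hτk : w * cs.simple (τ k) = cs.simple k * w := by
          rw [hc (τ k) hkw]
          congr 1
          rw [← hφs k, hφ2]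
        have hmem2 : cs.simple (τ k) * u₀ ∈ Subgroup.closure (cs.simple '' X) :=
          Subgroup.mul_mem _ (Subgroup.subset_closure ⟨τ k, hkw, rfl⟩) hu₀S
        have h10 : w * (cs.simple (τ k) * u₀) = cs.simple k * (w * u₀) := by
          rw [← mul_assoc, hτk, mul_assoc]
        have := hmin _ hmem2
        rw [h10] at this
        omega
      have hwS : w ∈ Subgroup.closure (cs.simple '' X) := by
        have : w = u₀⁻¹ := eq_inv_of_mul_eq_one_left hx1
        rw [this]
        exact Subgroup.inv_mem _ hu₀S
      have hw2 : w * w = 1 := by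
        have := hcomm w hwS
        rw [hw] at this
        rw [this]
        simp
      -- finiteness
      obtain ⟨ωw, hωwred, hωw⟩ := cs.exists_reduced_word' w
      have hXE : ∀ i ∈ X, cs.simple i ∈ cs.rightInvSeq ωw := fun i hi =>
        mem_ris_of_rightDescent cs (hd i hi) hωwred hωw
      have hfin : Set.Finite ((Subgroup.closure (cs.simple '' X) : Subgroup W) : Set W) := by
        apply Set.Finite.subset
          (Set.Finite.image (fun l : List W => l.prod)
            (finite_bounded_lists {t | t ∈ cs.rightInvSeq ωw} (List.finite_toSet _)
              (cs.length w)))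
        intro u hu
        obtain ⟨ω, hX2, hlen2, hword2⟩ := exists_reduced_word_over cs X hu
        refine ⟨ω.map cs.simple, ⟨?_, ?_⟩, ?_⟩
        · rw [List.length_map, hlen2]
          have := hadd u hu
          omega
        · intro x hx
          obtain ⟨i, hiω, rfl⟩ := List.mem_map.mp hx
          exact hXE i (hX2 i hiω)
        · rw [hword2]; rfl
      refine ⟨1, X, w, hwS, hfin, ?_, ?_, by simp⟩
      · intro u hu
        have := hadd u hu
        omega
      · intro i hi
        calc w * cs.simple i * w = (φ (cs.simple i) * w) * w := by rw [hc i hi]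
          _ = φ (cs.simple i) * (w * w) := by rw [mul_assoc]
          _ = cs.simple (τ i) := by rw [hw2, hφs]; simp
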